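/- Summing the joint probabilities of the localized Bell measurement over all (a,b) pairs yielding the same effective outcome c recovers the Born probability of the nonlocal BSM: Σ_{(a,b): σ_aσ_b ∝ σ_c} |(⟨B_a|₁₂⊗⟨B_b|₃₄)(|ψ⟩₁₄⊗|Φ⁺⟩₂₃)|² = |⟨B_c|ψ⟩|² for every two-qubit state |ψ⟩ and every c ∈ {0,1,2,3}. -/

import Mathlib

open Matrix
open scoped Kronecker BigOperators ComplexOrder

noncomputable section

/-- Hermitian inner product (conjugate-linear in the first argument). -/
def dot {I : Type*} [Fintype I] (v w : I → ℂ) : ℂ := ∑ i, star (v i) * w i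

/-- Outer product |v⟩⟨v|. -/
def outer {I : Type*} (v : I → ℂ) : Matrix I I ℂ := fun i j => v i * star (v j)

def ket0 : Fin 2 → ℂ := fun i => if i = 0 then 1 else 0
def ket1 : Fin 2 → ℂ := fun i => if i = 1 then 1 else 0

/-- 1/√2 as a complex number. -/
def isq2 : ℂ := ((Real.sqrt 2)⁻¹ : ℝ)

def ketP : Fin 2 → ℂ := fun _ => isq2
def ketM : Fin 2 → ℂ := fun i => if i = 0 then isq2 else -isq2

/-- Tensor product of two qubit state vectors. -/
def tp (v w : Fin 2 → ℂ) : Fin 2 × Fin 2 → ℂ := fun p => v p.1 * w p.2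

/-- Partial trace over the first (Alice's) qubit; result acts on Bob's qubit. -/
def ptrA (ρ : Matrix (Fin 2 × Fin 2) (Fin 2 × Fin 2) ℂ) : Matrix (Fin 2) (Fin 2) ℂ :=
  fun b b' => ∑ a, ρ (a, b) (a, b')

/-- Partial trace over the second (Bob's) qubit; result acts on Alice's qubit. -/
def ptrB (ρ : Matrix (Fin 2 × Fin 2) (Fin 2 × Fin 2) ℂ) : Matrix (Fin 2) (Fin 2) ℂ :=
  fun a a' => ∑ b, ρ (a, b) (a', b)

/-- Nonselective ideal (Lüders) measurement channel in the orthonormal basis `e`. -/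
def measChan (e : Fin 4 → (Fin 2 × Fin 2 → ℂ))
    (ρ : Matrix (Fin 2 × Fin 2) (Fin 2 × Fin 2) ℂ) : Matrix (Fin 2 × Fin 2) (Fin 2 × Fin 2) ℂ :=
  ∑ i, outer (e i) * ρ * outer (e i)

/-- Pauli matrices. -/
def sx : Matrix (Fin 2) (Fin 2) ℂ := !![0, 1; 1, 0]
def sy : Matrix (Fin 2) (Fin 2) ℂ := !![0, -Complex.I; Complex.I, 0]
def sz : Matrix (Fin 2) (Fin 2) ℂ := !![1, 0; 0, -1]

def pauli : Fin 4 → Matrix (Fin 2) (Fin 2) ℂ := ![1, sx, sy, sz]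

/-- The Bell state Φ⁺ = (|00⟩+|11⟩)/√2. -/
def phiP : Fin 2 × Fin 2 → ℂ := fun p => if p.1 = p.2 then isq2 else 0

/-- Bell basis parametrized by Pauli operators: `bellP k = (I ⊗ σ_k) Φ⁺`. -/
def bellP (k : Fin 4) : Fin 2 × Fin 2 → ℂ := fun p => isq2 * pauli k p.2 p.1

/-- Explicit Bell basis in the order Φ⁺, Ψ⁺, Ψ⁻, Φ⁻. -/
def bPhiP : Fin 2 × Fin 2 → ℂ := fun p => if p.1 = p.2 then isq2 else 0
def bPhiM : Fin 2 × Fin 2 → ℂ := fun p => if p.1 = p.2 then (if p.1 = 0 then isq2 else -isq2) else 0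
def bPsiP : Fin 2 × Fin 2 → ℂ := fun p => if p.1 = p.2 then 0 else isq2
def bPsiM : Fin 2 × Fin 2 → ℂ := fun p => if p.1 = p.2 then 0 else (if p.1 = 0 then isq2 else -isq2)

def bellE : Fin 4 → (Fin 2 × Fin 2 → ℂ) := ![bPhiP, bPsiP, bPsiM, bPhiM]

/-- The twisted basis {|00⟩, |01⟩, |1+⟩, |1-⟩}. -/
def twisted : Fin 4 → (Fin 2 × Fin 2 → ℂ) := ![tp ket0 ket0, tp ket0 ket1, tp ket1 ketP, tp ket1 ketM]

/-- Amplitude that Alice's Bell measurement on qubits (1,2) yields outcome a and Bob's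
Bell measurement on (3,4) yields outcome b, when qubits (1,4) are in the state ψ and
qubits (2,3) are in Φ⁺. -/
def bsmLocAmp (ψ : Fin 2 × Fin 2 → ℂ) (a b : Fin 4) : ℂ :=
  ∑ q1 : Fin 2, ∑ q2 : Fin 2, ∑ q3 : Fin 2, ∑ q4 : Fin 2,
    star (bellP a (q1, q2)) * star (bellP b (q3, q4)) * (ψ (q1, q4) * phiP (q2, q3))

lemma isq2_sq : isq2 * isq2 = 1/2 := by
  have h : ((Real.sqrt 2)⁻¹ * (Real.sqrt 2)⁻¹ : ℝ) = 1/2 := by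
    rw [← mul_inv]
    rw [Real.mul_self_sqrt (by norm_num)]
    norm_num
  calc isq2 * isq2 = (((Real.sqrt 2)⁻¹ * (Real.sqrt 2)⁻¹ : ℝ) : ℂ) := by
        simp [isq2, Complex.ofReal_mul]
    _ = 1/2 := by rw [h]; norm_num
lemma star_isq2 : star isq2 = isq2 := by simp [isq2]

def pmul : Fin 4 → Fin 4 → Fin 4 :=
  ![![0,1,2,3], ![1,0,3,2], ![2,3,0,1], ![3,2,1,0]]

def pph : Fin 4 → Fin 4 → ℂ :=
  ![![1,1,1,1], ![1,1,Complex.I,-Complex.I], ![1,-Complex.I,1,Complex.I], ![1,Complex.I,-Complex.I,1]]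

lemma pauli_mul (a b : Fin 4) : pauli a * pauli b = pph a b • pauli (pmul a b) := by
  fin_cases a <;> fin_cases b <;>
    simp [pauli, sx, sy, sz, pmul, pph, Matrix.mul_fin_two, Matrix.vecHead, Matrix.vecTail,
      smul_eq_mul] <;> ext i j <;> fin_cases i <;> fin_cases j <;>
    simp [Matrix.one_apply, Matrix.vecHead, Matrix.vecTail] <;> ring
lemma trace_pauli_pauli (d c : Fin 4) : (pauli d * pauli c).trace = if d = c then 2 else 0 := by
  fin_cases d <;> fin_cases c <;>
    simp [pauli, sx, sy, sz, Matrix.trace_fin_two, Matrix.mul_fin_two,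
      Matrix.vecHead, Matrix.vecTail] <;> ring_nf <;> simp [Complex.I_sq] <;> ring

lemma pph_ne (a b : Fin 4) : pph a b ≠ 0 := by
  fin_cases a <;> fin_cases b <;> simp [pph, Matrix.vecHead, Matrix.vecTail, Complex.I_ne_zero]

lemma cond_iff (a b c : Fin 4) :
    (∃ z : ℂ, z ≠ 0 ∧ pauli a * pauli b = z • pauli c) ↔ pmul a b = c := by
  constructor
  · rintro ⟨z, hz, h⟩
    by_contra hne
    have h1 : ((pauli a * pauli b) * pauli c).trace = 0 := by
      rw [pauli_mul a b, Matrix.smul_mul, Matrix.trace_smul, trace_pauli_pauli,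
        if_neg hne, smul_zero]
    have h2 : ((pauli a * pauli b) * pauli c).trace = z * 2 := by
      rw [h, Matrix.smul_mul, Matrix.trace_smul, trace_pauli_pauli, if_pos rfl, smul_eq_mul]
    rw [h1] at h2
    exact hz (by simpa using h2.symm)
  · rintro rfl
    exact ⟨pph a b, pph_ne a b, pauli_mul a b⟩
lemma isq2_pow2 : isq2^2 = 1/2 := by rw [sq]; exact isq2_sq
lemma isq2_pow3 : isq2^3 = (1/2) * isq2 := by rw [pow_succ, isq2_pow2]

set_option maxHeartbeats 2000000 in
lemma amp_eq (ψ : Fin 2 × Fin 2 → ℂ) (a b : Fin 4) :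
    bsmLocAmp ψ a b = 1/2 * star (pph b a) * dot (bellP (pmul a b)) ψ := by
  fin_cases a <;> fin_cases b <;>
  · simp only [bsmLocAmp, dot, Fin.sum_univ_two, Fintype.sum_prod_type, bellP, phiP,
      pauli, pmul, pph, sx, sy, sz, Matrix.vecHead, Matrix.vecTail]
    norm_num [star_isq2]
    ring_nf
    try simp [isq2_pow2, isq2_pow3]
    try ring
    try (simp only [pow_two, Complex.I_mul_I]; ring)
lemma norm_pph (a b : Fin 4) : ‖pph a b‖ = 1 := by
  fin_cases a <;> fin_cases b <;> simp [pph, Matrix.vecHead, Matrix.vecTail]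

lemma norm_amp (ψ : Fin 2 × Fin 2 → ℂ) (a b : Fin 4) :
    ‖bsmLocAmp ψ a b‖^2 = 1/4 * ‖dot (bellP (pmul a b)) ψ‖^2 := by
  rw [amp_eq, norm_mul, norm_mul, norm_star, norm_pph]
  norm_num; ring

open Classical in
/-- summing the joint probabilities of the localized Bell measurement over
all pairs (a,b) with σ_a σ_b ∝ σ_c recovers the Born probability of the nonlocal BSM. -/
theorem bsm_localization_sum_recovers_born (ψ : Fin 2 × Fin 2 → ℂ) (hψ : dot ψ ψ = 1)
    (c : Fin 4) :
    (∑ a : Fin 4, ∑ b : Fin 4,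
        if ∃ z : ℂ, z ≠ 0 ∧ pauli a * pauli b = z • pauli c
        then ‖bsmLocAmp ψ a b‖ ^ 2 else 0) = ‖dot (bellP c) ψ‖ ^ 2 := by
  simp only [cond_iff, norm_amp]
  fin_cases c <;>
    simp [Fin.sum_univ_four, pmul, Matrix.vecHead, Matrix.vecTail] <;> ring
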